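/- Let (Ω, F, P) be a probability space, let D be an a.s. strictly positive integrable random variable with E[D] = 1, and let U_M, U_L be utility functions on (0,∞) such that −U_M''(x)/U_M'(x) ≥ −U_L''(x)/U_L'(x) for all x > 0, and suppose in addition that at least one of the functions x ↦ −U_M''(x)/U_M'(x), x ↦ −U_L''(x)/U_L'(x) is nonincreasing on (0,∞). Let X_M and X_L be a.s. strictly positive integrable random variables satisfying U_M'(X_M) = D and U_L'(X_L) = D almost surely, with D·X_M and D·X_L integrable and E[D·X_M] = E[D·X_L]. Then E[((X_M − E[X_M]) − K)⁺] ≤ E[((X_L − E[X_L]) − K)⁺] for every K ∈ ℝ; that is, X_M − E[X_M] ≤_C X_L − E[X_L]. -/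

import Mathlib

open MeasureTheory Set Filter

private lemma aux_strictAntiOn (f f' : ℝ → ℝ) (hd : ∀ x > (0:ℝ), HasDerivAt f (f' x) x)
    (hneg : ∀ x > (0:ℝ), f' x < 0) : StrictAntiOn f (Ioi 0) := by
  apply strictAntiOn_of_deriv_neg (convex_Ioi 0)
  · intro x hx
    exact ((hd x hx).continuousAt).continuousWithinAt
  · intro x hx
    rw [interior_Ioi] at hx
    rw [(hd x hx).deriv]
    exact hneg x hx

private lemma aux_exists_inv (f f' : ℝ → ℝ) (hd : ∀ x > (0:ℝ), HasDerivAt f (f' x) x)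
    (h0 : Tendsto f (nhdsWithin 0 (Ioi 0)) atTop)
    (htop : Tendsto f atTop (nhds 0)) (d : ℝ) (hd0 : 0 < d) :
    ∃ ξ > (0:ℝ), f ξ = d := by
  obtain ⟨b, hb1, hbd⟩ : ∃ b, 1 ≤ b ∧ f b < d := by
    have h1 : ∀ᶠ x in atTop, f x < d := htop.eventually_lt_const hd0
    obtain ⟨b, hb⟩ := (h1.and (eventually_ge_atTop (1:ℝ))).exists
    exact ⟨b, hb.2, hb.1⟩
  have hbpos : (0:ℝ) < b := lt_of_lt_of_le one_pos hb1
  obtain ⟨a, ha, had⟩ : ∃ a, a ∈ Ioo (0:ℝ) b ∧ d < f a := by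
    have h1 : ∀ᶠ x in nhdsWithin 0 (Ioi 0), d < f x := h0.eventually (eventually_gt_atTop d)
    have h2 : Ioo (0:ℝ) b ∈ nhdsWithin (0:ℝ) (Ioi 0) := Ioo_mem_nhdsGT_of_mem ⟨le_refl _, hbpos⟩
    obtain ⟨a, h3, h4⟩ := (h1.and (eventually_of_mem h2 (fun x hx => hx))).exists
    exact ⟨a, h4, h3⟩
  have hcont : ContinuousOn f (Icc a b) := by
    intro x hx
    exact ((hd x (lt_of_lt_of_le ha.1 hx.1)).continuousAt).continuousWithinAt
  have hmem : d ∈ Icc (f b) (f a) := ⟨le_of_lt hbd, le_of_lt had⟩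
  obtain ⟨ξ, hξ, hfξ⟩ := intermediate_value_Icc' (le_of_lt ha.2) hcont hmem
  exact ⟨ξ, lt_of_lt_of_le ha.1 hξ.1, hfξ⟩

private lemma aux_antitone_ratio (UM' UM'' UL' UL'' : ℝ → ℝ)
    (hUMd' : ∀ x > (0:ℝ), HasDerivAt UM' (UM'' x) x)
    (hULd' : ∀ x > (0:ℝ), HasDerivAt UL' (UL'' x) x)
    (hUM'pos : ∀ x > (0:ℝ), 0 < UM' x) (hUL'pos : ∀ x > (0:ℝ), 0 < UL' x)
    (c : ℝ) (hc : c ≤ 0)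
    (hkey : ∀ x, -c < x → -UL'' x / UL' x ≤ -UM'' (x + c) / UM' (x + c)) :
    AntitoneOn (fun x => UM' (x + c) / UL' x) (Ioi (-c)) := by
  have hpos : ∀ x, -c < x → 0 < x := fun x hx => lt_of_le_of_lt (neg_nonneg.mpr hc) hx
  have hposc : ∀ x, -c < x → 0 < x + c := fun x hx => by linarith
  have hder : ∀ x, -c < x → HasDerivAt (fun y => UM' (y + c) / UL' y)
      ((UM'' (x + c) * UL' x - UM' (x + c) * UL'' x) / UL' x ^ 2) x := by
    intro x hx
    have h1 : HasDerivAt (fun y : ℝ => UM' (y + c)) (UM'' (x + c) * 1) x :=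
      (hUMd' (x + c) (hposc x hx)).comp x ((hasDerivAt_id x).add_const c)
    rw [mul_one] at h1
    exact h1.div (hULd' x (hpos x hx)) (ne_of_gt (hUL'pos x (hpos x hx)))
  apply antitoneOn_of_deriv_nonpos (convex_Ioi (-c))
  · intro x hx
    exact ((hder x hx).continuousAt).continuousWithinAt
  · intro x hx
    rw [interior_Ioi] at hx
    exact ((hder x hx).differentiableAt).differentiableWithinAt
  · intro x hx
    rw [interior_Ioi] at hx
    rw [(hder x hx).deriv]
    have hL := hUL'pos x (hpos x hx)
    have hM := hUM'pos (x + c) (hposc x hx)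
    have h2 := hkey x hx
    rw [div_le_div_iff₀ hL hM] at h2
    apply div_nonpos_of_nonpos_of_nonneg
    · nlinarith
    · positivity

private lemma aux_ppA (u v K : ℝ) (h : v ≤ u ∨ K ≤ u) :
    max (u - K) 0 - max (v - K) 0 ≤ u - v := by
  have h1 : v - K ≤ max (v - K) 0 := le_max_left _ _
  have h2 : (0:ℝ) ≤ max (v - K) 0 := le_max_right _ _
  rcases le_total (u - K) 0 with h3 | h3
  · rw [max_eq_right h3]
    rcases h with h | h
    · linarith
    · linarith
  · rw [max_eq_left h3]; linarith

private lemma aux_ppB (u v K : ℝ) (h : u ≤ v ∨ u ≤ K) :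
    max (u - K) 0 ≤ max (v - K) 0 := by
  rcases h with h | h
  · exact max_le_max (by linarith) le_rfl
  · rw [max_eq_right (by linarith : u - K ≤ 0)]; exact le_max_right _ _

/-- **Convex order of centered payoffs in complete markets (Dybvig–Wang / Theorem 2).**
Under the assumptions of the monotone convex order theorem, if in addition at least one
of the two absolute risk aversions is nonincreasing on `(0,∞)`, then the centered optimal
payoffs are ordered in the convex order: `X_M − E[X_M] ≤_C X_L − E[X_L]`. -/
theorem more_risk_averse_centered_convex_order
    {Ω : Type*} [MeasureSpace Ω] [IsProbabilityMeasure (volume : Measure Ω)]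
    (D : Ω → ℝ) (hDpos : ∀ᵐ ω, 0 < D ω) (hDint : Integrable D)
    (hDmean : (∫ ω, D ω) = 1)
    (UM UM' UM'' UL UL' UL'' : ℝ → ℝ)
    (hUMd : ∀ x > (0 : ℝ), HasDerivAt UM (UM' x) x)
    (hUMd' : ∀ x > (0 : ℝ), HasDerivAt UM' (UM'' x) x)
    (hULd : ∀ x > (0 : ℝ), HasDerivAt UL (UL' x) x)
    (hULd' : ∀ x > (0 : ℝ), HasDerivAt UL' (UL'' x) x)
    (hUM'pos : ∀ x > (0 : ℝ), 0 < UM' x) (hUM''neg : ∀ x > (0 : ℝ), UM'' x < 0)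
    (hUL'pos : ∀ x > (0 : ℝ), 0 < UL' x) (hUL''neg : ∀ x > (0 : ℝ), UL'' x < 0)
    (hUMinada0 : Tendsto UM' (nhdsWithin 0 (Ioi 0)) atTop)
    (hUMinadaTop : Tendsto UM' atTop (nhds 0))
    (hULinada0 : Tendsto UL' (nhdsWithin 0 (Ioi 0)) atTop)
    (hULinadaTop : Tendsto UL' atTop (nhds 0))
    (hRA : ∀ x > (0 : ℝ), -UL'' x / UL' x ≤ -UM'' x / UM' x)
    (hNIARA : AntitoneOn (fun x => -UM'' x / UM' x) (Ioi 0) ∨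
      AntitoneOn (fun x => -UL'' x / UL' x) (Ioi 0))
    (XM XL : Ω → ℝ)
    (hXMpos : ∀ᵐ ω, 0 < XM ω) (hXLpos : ∀ᵐ ω, 0 < XL ω)
    (hXMint : Integrable XM) (hXLint : Integrable XL)
    (hfocM : ∀ᵐ ω, UM' (XM ω) = D ω) (hfocL : ∀ᵐ ω, UL' (XL ω) = D ω)
    (hDXMint : Integrable (fun ω => D ω * XM ω))
    (hDXLint : Integrable (fun ω => D ω * XL ω))
    (hbudget : (∫ ω, D ω * XM ω) = ∫ ω, D ω * XL ω) :
    ∀ K : ℝ, ∫ ω, max ((XM ω - ∫ ω', XM ω') - K) 0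
      ≤ ∫ ω, max ((XL ω - ∫ ω', XL ω') - K) 0 := by
  intro K
  set a : ℝ := ∫ ω', XM ω' with ha
  set b : ℝ := ∫ ω', XL ω' with hb
  -- basic monotonicity facts
  have hMant : StrictAntiOn UM' (Ioi 0) := aux_strictAntiOn UM' UM'' hUMd' hUM''neg
  have hLant : StrictAntiOn UL' (Ioi 0) := aux_strictAntiOn UL' UL'' hULd' hUL''neg
  have hMantW : AntitoneOn UM' (Ioi 0) := hMant.antitoneOn
  have hLantW : AntitoneOn UL' (Ioi 0) := hLant.antitoneOn
  -- almost everywhere good event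
  have hG : ∀ᵐ ω, 0 < D ω ∧ 0 < XM ω ∧ 0 < XL ω ∧ UM' (XM ω) = D ω ∧ UL' (XL ω) = D ω := by
    filter_upwards [hDpos, hXMpos, hXLpos, hfocM, hfocL] with ω h1 h2 h3 h4 h5
    exact ⟨h1, h2, h3, h4, h5⟩
  -- integrability facts
  have hW : Integrable (fun ω => XM ω - XL ω) := hXMint.sub hXLint
  have hDW : Integrable (fun ω => D ω * XM ω - D ω * XL ω) := hDXMint.sub hDXLint
  have hDWzero : (∫ ω, (D ω * XM ω - D ω * XL ω)) = 0 := by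
    rw [integral_sub hDXMint hDXLint, hbudget, sub_self]
  have hWint : (∫ ω, (XM ω - XL ω)) = a - b := integral_sub hXMint hXLint
  have hu_int : Integrable (fun ω => XM ω - a - K) := by
    simpa [sub_sub, Pi.sub_def] using hXMint.sub (integrable_const (a + K))
  have hv_int : Integrable (fun ω => XL ω - b - K) := by
    simpa [sub_sub, Pi.sub_def] using hXLint.sub (integrable_const (b + K))
  have hψ1int : Integrable (fun ω => max (XM ω - a - K) 0) := hu_int.pos_part
  have hψ2int : Integrable (fun ω => max (XL ω - b - K) 0) := hv_int.pos_part
  have hdint : Integrable (fun ω => (XM ω - a) - (XL ω - b)) := by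
    have : (fun ω => (XM ω - a) - (XL ω - b)) = fun ω => (XM ω - XL ω) - (a - b) := by
      funext ω; ring
    rw [this]
    exact hW.sub (integrable_const (a - b))
  have hdzero : (∫ ω, ((XM ω - a) - (XL ω - b))) = 0 := by
    have h1 : (fun ω => (XM ω - a) - (XL ω - b)) = fun ω => (XM ω - XL ω) - (a - b) := by
      funext ω; ring
    rw [h1, integral_sub hW (integrable_const (a - b)), hWint, integral_const]
    simp
  -- the two finishing moves
  have hfinA : (∀ᵐ ω, max (XM ω - a - K) 0 ≤ max (XL ω - b - K) 0) →
      (∫ ω, max (XM ω - a - K) 0) ≤ ∫ ω, max (XL ω - b - K) 0 := by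
    intro h
    exact integral_mono_ae hψ1int hψ2int h
  have hfinB : (∀ᵐ ω, max (XM ω - a - K) 0 ≤ max (XL ω - b - K) 0 + ((XM ω - a) - (XL ω - b))) →
      (∫ ω, max (XM ω - a - K) 0) ≤ ∫ ω, max (XL ω - b - K) 0 := by
    intro h
    calc (∫ ω, max (XM ω - a - K) 0)
        ≤ ∫ ω, (max (XL ω - b - K) 0 + ((XM ω - a) - (XL ω - b))) :=
          integral_mono_ae hψ1int (hψ2int.add hdint) h
      _ = (∫ ω, max (XL ω - b - K) 0) + ∫ ω, ((XM ω - a) - (XL ω - b)) :=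
          integral_add hψ2int hdint
      _ = ∫ ω, max (XL ω - b - K) 0 := by rw [hdzero, add_zero]
  -- Step 1 : a - b ≤ 0
  have hρ : AntitoneOn (fun x => UM' x / UL' x) (Ioi 0) := by
    have h := aux_antitone_ratio UM' UM'' UL' UL'' hUMd' hULd' hUM'pos hUL'pos 0 le_rfl
      (fun x hx => by simpa using hRA x (by simpa using hx))
    simpa using h
  have hc : a - b ≤ 0 := by
    set S : Set ℝ := {x : ℝ | 0 < x ∧ UL' x ≤ UM' x} with hS
    have hSdown : ∀ x y, 0 < x → x ≤ y → y ∈ S → x ∈ S := by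
      intro x y hx hxy hy
      refine ⟨hx, ?_⟩
      have h1 := hρ (mem_Ioi.mpr hx) (mem_Ioi.mpr (lt_of_lt_of_le hx hxy)) hxy
      have h2 : (1:ℝ) ≤ UM' y / UL' y :=
        (one_le_div (hUL'pos y (lt_of_lt_of_le hx hxy))).mpr hy.2
      exact (one_le_div (hUL'pos x hx)).mp (le_trans h2 h1)
    by_cases hSne : S.Nonempty
    · by_cases hSbdd : BddAbove S
      · -- the threshold case
        set t₁ := sSup S with ht₁
        obtain ⟨s₀, hs₀⟩ := id hSne
        have ht₁pos : 0 < t₁ := lt_of_lt_of_le hs₀.1 (le_csSup hSbdd hs₀)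
        set κ := UL' t₁ with hκ
        have hκpos : 0 < κ := hUL'pos t₁ ht₁pos
        have hpt : ∀ᵐ ω, (κ - D ω) * (XM ω - XL ω) ≤ 0 := by
          filter_upwards [hG] with ω hω
          obtain ⟨hD, hXM, hXL, hM, hL⟩ := hω
          rcases lt_trichotomy (XM ω) (XL ω) with hlt | heq | hgt
          · -- XL ∉ S, so t₁ ≤ XL, κ ≥ D
            have h1 : UM' (XL ω) < UM' (XM ω) :=
              hMant (mem_Ioi.mpr hXM) (mem_Ioi.mpr hXL) hlt
            rw [hM, ← hL] at h1
            have hnot : XL ω ∉ S := fun hmem => absurd hmem.2 (not_le.mpr h1)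
            have h2 : t₁ ≤ XL ω := by
              apply csSup_le hSne
              intro s hs
              by_contra h3
              push_neg at h3
              exact hnot (hSdown (XL ω) s hXL (le_of_lt h3) hs)
            have h4 : UL' (XL ω) ≤ κ :=
              hLantW (mem_Ioi.mpr ht₁pos) (mem_Ioi.mpr hXL) h2
            rw [hL] at h4
            exact mul_nonpos_of_nonneg_of_nonpos (by linarith) (by linarith)
          · rw [heq]; simp
          · -- XL ∈ S, so XL ≤ t₁, D ≥ κ
            have h1 : UM' (XM ω) < UM' (XL ω) :=
              hMant (mem_Ioi.mpr hXL) (mem_Ioi.mpr hXM) hgt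
            rw [hM, ← hL] at h1
            have hmem : XL ω ∈ S := ⟨hXL, le_of_lt h1⟩
            have h2 : XL ω ≤ t₁ := le_csSup hSbdd hmem
            have h4 : κ ≤ UL' (XL ω) :=
              hLantW (mem_Ioi.mpr hXL) (mem_Ioi.mpr ht₁pos) h2
            rw [hL] at h4
            exact mul_nonpos_of_nonpos_of_nonneg (by linarith) (by linarith)
        have h5 : (∫ ω, (κ - D ω) * (XM ω - XL ω)) ≤ 0 := integral_nonpos_of_ae hpt
        have h6 : (∫ ω, (κ - D ω) * (XM ω - XL ω)) = κ * (a - b) := by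
          have heq : (fun ω => (κ - D ω) * (XM ω - XL ω)) =
              fun ω => κ * (XM ω - XL ω) - (D ω * XM ω - D ω * XL ω) := by
            funext ω; ring
          rw [heq, integral_sub (hW.const_mul κ) hDW, hDWzero, integral_const_mul, hWint]
          ring
        rw [h6] at h5
        by_contra h7
        push_neg at h7
        nlinarith
      · -- S unbounded: XM = XL a.e.
        have hall : ∀ x, 0 < x → x ∈ S := by
          intro x hx
          obtain ⟨y, hy, hxy⟩ := not_bddAbove_iff.mp hSbdd x
          exact hSdown x y hx (le_of_lt hxy) hy
        have hWnn : ∀ᵐ ω, 0 ≤ XM ω - XL ω := by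
          filter_upwards [hG] with ω hω
          obtain ⟨hD, hXM, hXL, hM, hL⟩ := hω
          rcases le_or_gt (XL ω) (XM ω) with h | h
          · linarith
          · exfalso
            have h1 : UM' (XL ω) < UM' (XM ω) :=
              hMant (mem_Ioi.mpr hXM) (mem_Ioi.mpr hXL) h
            have h2 := (hall (XL ω) hXL).2
            rw [hM, ← hL] at h1
            linarith
        have hDWnn : (0 : Ω → ℝ) ≤ᵐ[volume] fun ω => D ω * XM ω - D ω * XL ω := by
          filter_upwards [hG, hWnn] with ω hω hw
          obtain ⟨hD, _, _, _, _⟩ := hω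
          have : 0 ≤ D ω * (XM ω - XL ω) := mul_nonneg (le_of_lt hD) hw
          simpa [mul_sub] using this
        have hzero := (integral_eq_zero_iff_of_nonneg_ae hDWnn hDW).mp hDWzero
        have hW0 : (fun ω => XM ω - XL ω) =ᵐ[volume] (fun _ => (0:ℝ)) := by
          filter_upwards [hG, hzero] with ω hω hz
          obtain ⟨hD, _, _, _, _⟩ := hω
          have h1 : D ω * (XM ω - XL ω) = 0 := by
            have : D ω * XM ω - D ω * XL ω = 0 := hz
            linarith [mul_sub (D ω) (XM ω) (XL ω)]
          rcases mul_eq_zero.mp h1 with h2 | h2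
          · exact absurd h2 (ne_of_gt hD)
          · exact h2
        have : (∫ ω, (XM ω - XL ω)) = 0 := by
          rw [integral_congr_ae hW0, integral_zero]
        rw [hWint] at this
        linarith
    · -- S empty : XM ≤ XL a.e.
      have hWnp : ∀ᵐ ω, XM ω - XL ω ≤ 0 := by
        filter_upwards [hG] with ω hω
        obtain ⟨hD, hXM, hXL, hM, hL⟩ := hω
        rcases le_or_gt (XM ω) (XL ω) with h | h
        · linarith
        · exfalso
          have h1 : UM' (XM ω) < UM' (XL ω) :=
            hMant (mem_Ioi.mpr hXL) (mem_Ioi.mpr hXM) h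
          rw [hM, ← hL] at h1
          exact hSne ⟨XL ω, hXL, le_of_lt h1⟩
      have := integral_nonpos_of_ae hWnp
      rw [hWint] at this
      exact this
  -- main case split
  by_cases hA : ∀ᵐ ω, XM ω - XL ω ≤ a - b
  · -- XM - a ≤ XL - b a.e.
    apply hfinA
    filter_upwards [hA] with ω h
    exact aux_ppB _ _ _ (Or.inl (by linarith))
  · by_cases hB : ∀ᵐ ω, a - b ≤ XM ω - XL ω
    · apply hfinB
      filter_upwards [hB] with ω h
      have := aux_ppA (XM ω - a) (XL ω - b) K (Or.inl (by linarith))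
      have h2 : XM ω - a - K = (XM ω - a) - K := by ring
      have h3 : XL ω - b - K = (XL ω - b) - K := by ring
      rw [h2, h3]
      linarith
    · -- genuine crossing case
      -- extract witnesses on both sides
      have hex1 : ∃ ω, (0 < D ω ∧ 0 < XM ω ∧ 0 < XL ω ∧ UM' (XM ω) = D ω ∧ UL' (XL ω) = D ω)
          ∧ a - b < XM ω - XL ω := by
        by_contra hcon
        push_neg at hcon
        exact hA (by filter_upwards [hG] with ω h; exact hcon ω h)
      have hex2 : ∃ ω, (0 < D ω ∧ 0 < XM ω ∧ 0 < XL ω ∧ UM' (XM ω) = D ω ∧ UL' (XL ω) = D ω)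
          ∧ XM ω - XL ω < a - b := by
        by_contra hcon
        push_neg at hcon
        exact hB (by filter_upwards [hG] with ω h; exact hcon ω h)
      obtain ⟨ω₁, ⟨hD1, hXM1, hXL1, hM1, hL1⟩, hW1⟩ := hex1
      obtain ⟨ω₂, ⟨hD2, hXM2, hXL2, hM2, hL2⟩, hW2⟩ := hex2
      -- the shifted-ratio antitone function
      have hσ : AntitoneOn (fun x => UM' (x + (a - b)) / UL' x) (Ioi (-(a - b))) := by
        apply aux_antitone_ratio UM' UM'' UL' UL'' hUMd' hULd' hUM'pos hUL'pos (a - b) hc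
        intro x hx
        have hx0 : 0 < x := lt_of_le_of_lt (neg_nonneg.mpr hc) hx
        have hxc : 0 < x + (a - b) := by linarith
        rcases hNIARA with hM | hL
        · exact le_trans (hRA x hx0)
            (hM (mem_Ioi.mpr hxc) (mem_Ioi.mpr hx0) (by linarith))
        · exact le_trans (hL (mem_Ioi.mpr hxc) (mem_Ioi.mpr hx0) (by linarith))
            (hRA (x + (a - b)) hxc)
      set T : Set ℝ := {x : ℝ | -(a - b) < x ∧ UM' (x + (a - b)) < UL' x} with hT
      have hTup : ∀ x y, x ∈ T → x ≤ y → y ∈ T := by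
        intro x y hx hxy
        have hy1 : -(a - b) < y := lt_of_lt_of_le hx.1 hxy
        refine ⟨hy1, ?_⟩
        have hx0 : 0 < x := lt_of_le_of_lt (neg_nonneg.mpr hc) hx.1
        have hy0 : 0 < y := lt_of_le_of_lt (neg_nonneg.mpr hc) hy1
        have h1 := hσ (mem_Ioi.mpr hx.1) (mem_Ioi.mpr hy1) hxy
        have h2 : UM' (x + (a - b)) / UL' x < 1 := (div_lt_one (hUL'pos x hx0)).mpr hx.2
        exact (div_lt_one (hUL'pos y hy0)).mp (lt_of_le_of_lt h1 h2)
      -- every element of T is ≥ XL ω₁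
      have hTlb : ∀ x ∈ T, XL ω₁ ≤ x := by
        intro x hx
        by_contra hlt
        push_neg at hlt
        have hmem : XL ω₁ ∈ T := hTup x (XL ω₁) hx (le_of_lt hlt)
        have h1 : UM' (XL ω₁ + (a - b)) < UL' (XL ω₁) := hmem.2
        rw [hL1, ← hM1] at h1
        have hposc : 0 < XL ω₁ + (a - b) := by
          have := hmem.1; linarith
        have h2 : XM ω₁ < XL ω₁ + (a - b) := by
          by_contra h3
          push_neg at h3
          have := hMantW (mem_Ioi.mpr hposc) (mem_Ioi.mpr hXM1) h3
          linarith
        linarith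
      have hTne : T.Nonempty := by
        refine ⟨XL ω₂, ?_, ?_⟩
        · linarith
        · have hposc : 0 < XL ω₂ + (a - b) := by linarith
          have h1 : UM' (XL ω₂ + (a - b)) < UM' (XM ω₂) :=
            hMant (mem_Ioi.mpr hXM2) (mem_Ioi.mpr hposc) (by linarith)
          rw [hM2, ← hL2] at h1
          exact h1
      have hTbdd : BddBelow T := ⟨XL ω₁, hTlb⟩
      set θ := sInf T with hθ
      have hθlb : XL ω₁ ≤ θ := le_csInf hTne hTlb
      have hθpos : 0 < θ := lt_of_lt_of_le hXL1 hθlb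
      obtain ⟨ξ, hξpos, hξeq⟩ :=
        aux_exists_inv UM' UM'' hUMd' hUMinada0 hUMinadaTop (UL' θ) (hUL'pos θ hθpos)
      -- lower branch: W < a-b ⟹ ξ ≤ XM
      have hlow : ∀ᵐ ω, XM ω - XL ω < a - b → ξ ≤ XM ω := by
        filter_upwards [hG] with ω hω hWlt
        obtain ⟨hD, hXM, hXL, hM, hL⟩ := hω
        have hposc : 0 < XL ω + (a - b) := by linarith
        have hmem : XL ω ∈ T := by
          refine ⟨by linarith, ?_⟩
          have h1 : UM' (XL ω + (a - b)) < UM' (XM ω) :=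
            hMant (mem_Ioi.mpr hXM) (mem_Ioi.mpr hposc) (by linarith)
          rw [hM, ← hL] at h1
          exact h1
        have h2 : θ ≤ XL ω := csInf_le hTbdd hmem
        have h3 : UL' (XL ω) ≤ UL' θ :=
          hLantW (mem_Ioi.mpr hθpos) (mem_Ioi.mpr hXL) h2
        rw [hL, ← hξeq] at h3
        rw [← hM] at h3
        by_contra h4
        push_neg at h4
        have := hMant (mem_Ioi.mpr hXM) (mem_Ioi.mpr hξpos) h4
        linarith
      -- upper branch: W > a-b ⟹ XM ≤ ξ
      have hhigh : ∀ᵐ ω, a - b < XM ω - XL ω → XM ω ≤ ξ := by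
        filter_upwards [hG] with ω hω hWgt
        obtain ⟨hD, hXM, hXL, hM, hL⟩ := hω
        have h2 : XL ω ≤ θ := by
          by_contra h3
          push_neg at h3
          obtain ⟨x, hxT, hxlt⟩ := exists_lt_of_csInf_lt hTne h3
          have hmem : XL ω ∈ T := hTup x (XL ω) hxT (le_of_lt hxlt)
          have h4 : UM' (XL ω + (a - b)) < UL' (XL ω) := hmem.2
          rw [hL, ← hM] at h4
          have hposc : 0 < XL ω + (a - b) := by
            have := hmem.1; linarith
          have h5 : XM ω < XL ω + (a - b) := by
            by_contra h6
            push_neg at h6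
            have := hMantW (mem_Ioi.mpr hposc) (mem_Ioi.mpr hXM) h6
            linarith
          linarith
        have h3 : UL' θ ≤ UL' (XL ω) :=
          hLantW (mem_Ioi.mpr hXL) (mem_Ioi.mpr hθpos) h2
        rw [hL, ← hξeq] at h3
        rw [← hM] at h3
        by_contra h4
        push_neg at h4
        have := hMant (mem_Ioi.mpr hξpos) (mem_Ioi.mpr hXM) h4
        linarith
      by_cases hlam : a + K ≤ ξ
      · apply hfinB
        filter_upwards [hlow] with ω h1
        rcases le_or_gt (a - b) (XM ω - XL ω) with h2 | h2
        · have := aux_ppA (XM ω - a) (XL ω - b) K (Or.inl (by linarith))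
          have he : XM ω - a - K = (XM ω - a) - K := by ring
          have he' : XL ω - b - K = (XL ω - b) - K := by ring
          rw [he, he']
          linarith
        · have h3 := h1 h2
          have := aux_ppA (XM ω - a) (XL ω - b) K (Or.inr (by linarith))
          have he : XM ω - a - K = (XM ω - a) - K := by ring
          have he' : XL ω - b - K = (XL ω - b) - K := by ring
          rw [he, he']
          linarith
      · push_neg at hlam
        apply hfinA
        filter_upwards [hhigh] with ω h1
        rcases le_or_gt (XM ω - XL ω) (a - b) with h2 | h2
        · exact aux_ppB _ _ _ (Or.inl (by linarith))
        · exact aux_ppB _ _ _ (Or.inr (by linarith [h1 h2]))
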